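/- Let H and K be Hilbert spaces. Every compact operator T ∈ K(H, K) factors as T = k·S with k ∈ K(K) positive and S ∈ K(H, K); one may take k = (T T*)^{1/4}. Consequently K(H, K) equals the closed linear span of {k S : k ∈ K(K), S ∈ K(H, K)}. -/

import Mathlib

private lemma sq_rpow_quarter {x : ℝ} (hx : 0 ≤ x) :
    (x ^ ((4:ℝ)⁻¹)) ^ 2 = Real.sqrt x := by
  rw [← Real.rpow_natCast (x ^ ((4:ℝ)⁻¹)) 2, ← Real.rpow_mul hx, Real.sqrt_eq_rpow]
  norm_num

private lemma aux_R1 {t ε : ℝ} (ht : 0 ≤ t) (hε : 0 < ε) :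
    |t ^ ((4:ℝ)⁻¹) - t * (t ^ ((4:ℝ)⁻¹) * (t + ε)⁻¹)| ≤ ε ^ ((4:ℝ)⁻¹) := by
  have hu : 0 < t + ε := by linarith
  have h1 : t * (t ^ ((4:ℝ)⁻¹) * (t + ε)⁻¹) = t ^ ((4:ℝ)⁻¹) * (t / (t + ε)) := by ring
  have hx0 : 0 ≤ t / (t + ε) := by positivity
  have hx1 : t / (t + ε) ≤ 1 := by rw [div_le_one hu]; linarith
  have habs : t ^ ((4:ℝ)⁻¹) - t * (t ^ ((4:ℝ)⁻¹) * (t + ε)⁻¹)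
      = t ^ ((4:ℝ)⁻¹) * (ε / (t + ε)) := by
    rw [h1]; field_simp; ring
  rw [habs, abs_of_nonneg (by positivity)]
  -- t^p * ε/(t+ε) ≤ ε^p  ⟺  t^p * ε^{1-p} ≤ t+ε  (divide by ε^p)
  rcases le_total t ε with h | h
  · calc t ^ ((4:ℝ)⁻¹) * (ε / (t + ε)) ≤ ε ^ ((4:ℝ)⁻¹) * 1 :=
        mul_le_mul (Real.rpow_le_rpow ht h (by norm_num)) (by rw [div_le_one hu]; linarith)
          (by positivity) (by positivity)
    _ = ε ^ ((4:ℝ)⁻¹) := mul_one _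
  · -- ε ≤ t; then t^p ε / (t+ε) ≤ t^p ε / t = ε / t^{3/4} ≤ ε/ε^{3/4} = ε^{1/4}
    have ht0 : 0 < t := lt_of_lt_of_le hε h
    have key : t ^ ((4:ℝ)⁻¹) * ε ≤ ε ^ ((4:ℝ)⁻¹) * (t + ε) := by
      have h2 : ε = ε ^ ((4:ℝ)⁻¹) * ε ^ (1 - (4:ℝ)⁻¹) := by
        rw [← Real.rpow_add hε]; norm_num
      have h3 : t ^ ((4:ℝ)⁻¹) * ε ^ (1 - (4:ℝ)⁻¹) ≤ t ^ ((4:ℝ)⁻¹) * t ^ (1 - (4:ℝ)⁻¹) :=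
        mul_le_mul_of_nonneg_left (Real.rpow_le_rpow hε.le h (by norm_num)) (by positivity)
      have h4 : t ^ ((4:ℝ)⁻¹) * t ^ (1 - (4:ℝ)⁻¹) = t := by
        rw [← Real.rpow_add ht0]; norm_num
      calc t ^ ((4:ℝ)⁻¹) * ε = t ^ ((4:ℝ)⁻¹) * (ε ^ ((4:ℝ)⁻¹) * ε ^ (1 - (4:ℝ)⁻¹)) := by
            rw [← Real.rpow_add hε]; norm_num
        _ = ε ^ ((4:ℝ)⁻¹) * (t ^ ((4:ℝ)⁻¹) * ε ^ (1 - (4:ℝ)⁻¹)) := by ring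
        _ ≤ ε ^ ((4:ℝ)⁻¹) * t := by
            refine mul_le_mul_of_nonneg_left ?_ (by positivity)
            exact h3.trans_eq h4
        _ ≤ ε ^ ((4:ℝ)⁻¹) * (t + ε) := by nlinarith [Real.rpow_nonneg hε.le ((4:ℝ)⁻¹)]
    rw [show t ^ ((4:ℝ)⁻¹) * (ε / (t + ε)) = t ^ ((4:ℝ)⁻¹) * ε / (t + ε) from by ring,
      div_le_iff₀ hu]
    linarith

private lemma aux_add_rpow {x y : ℝ} (hx : 0 ≤ x) (hy : 0 ≤ y) :
    (x + y) ^ ((4:ℝ)⁻¹) ≤ x ^ ((4:ℝ)⁻¹) + y ^ ((4:ℝ)⁻¹) := by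
  have h := NNReal.rpow_add_le_add_rpow x.toNNReal y.toNNReal (by norm_num : (0:ℝ) ≤ (4:ℝ)⁻¹)
    (by norm_num)
  have := NNReal.coe_le_coe.2 h
  simpa [NNReal.coe_rpow, Real.coe_toNNReal x hx, Real.coe_toNNReal y hy,
    Real.coe_toNNReal _ (by positivity : (0:ℝ) ≤ x + y)] using this

private lemma sq_rpow_quarter' {x : ℝ} (hx : 0 ≤ x) :
    (x ^ ((4:ℝ)⁻¹)) ^ 2 = Real.sqrt x := by
  rw [← Real.rpow_natCast (x ^ ((4:ℝ)⁻¹)) 2, ← Real.rpow_mul hx, Real.sqrt_eq_rpow]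
  norm_num

private lemma aux_R2' {t a b c : ℝ} (ht : 0 ≤ t) (ha : 0 < a) (hab : a ≤ b) (hbc : b ≤ c) :
    t * ((t + a) ^ (-(4:ℝ)⁻¹) - (t + b) ^ (-(4:ℝ)⁻¹)) ^ 2 ≤ Real.sqrt c := by
  have hb : 0 < b := lt_of_lt_of_le ha hab
  have hc : 0 < c := lt_of_lt_of_le hb hbc
  set u := t + a with hud
  set v := t + b with hvd
  have hu : 0 < u := by positivity
  have hv : 0 < v := by positivity
  have huv : u ≤ v := by simp only [hud, hvd]; linarith
  have hup : 0 < u ^ ((4:ℝ)⁻¹) := Real.rpow_pos_of_pos hu _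
  have hvp : 0 < v ^ ((4:ℝ)⁻¹) := Real.rpow_pos_of_pos hv _
  have hd : u ^ (-(4:ℝ)⁻¹) - v ^ (-(4:ℝ)⁻¹)
      = (v ^ ((4:ℝ)⁻¹) - u ^ ((4:ℝ)⁻¹)) / (u ^ ((4:ℝ)⁻¹) * v ^ ((4:ℝ)⁻¹)) := by
    rw [Real.rpow_neg hu.le, Real.rpow_neg hv.le]
    field_simp
  have hmono : u ^ ((4:ℝ)⁻¹) ≤ v ^ ((4:ℝ)⁻¹) :=
    Real.rpow_le_rpow hu.le huv (by norm_num)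
  have hnum : v ^ ((4:ℝ)⁻¹) - u ^ ((4:ℝ)⁻¹) ≤ c ^ ((4:ℝ)⁻¹) := by
    have h1 : v ^ ((4:ℝ)⁻¹) ≤ u ^ ((4:ℝ)⁻¹) + (v - u) ^ ((4:ℝ)⁻¹) := by
      have := aux_add_rpow hu.le (by linarith : (0:ℝ) ≤ v - u)
      simpa using this
    have h2 : (v - u) ^ ((4:ℝ)⁻¹) ≤ c ^ ((4:ℝ)⁻¹) :=
      Real.rpow_le_rpow (by linarith) (by simp only [hud, hvd]; linarith) (by norm_num)
    linarith
  have hsq : ((u ^ (-(4:ℝ)⁻¹) - v ^ (-(4:ℝ)⁻¹))) ^ 2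
      ≤ Real.sqrt c / (Real.sqrt u * Real.sqrt v) := by
    rw [hd, div_pow, mul_pow, sq_rpow_quarter' hu.le, sq_rpow_quarter' hv.le]
    have hnum2 : (v ^ ((4:ℝ)⁻¹) - u ^ ((4:ℝ)⁻¹)) ^ 2 ≤ Real.sqrt c := by
      calc (v ^ ((4:ℝ)⁻¹) - u ^ ((4:ℝ)⁻¹)) ^ 2 ≤ (c ^ ((4:ℝ)⁻¹)) ^ 2 :=
            pow_le_pow_left₀ (by linarith) hnum 2
        _ = Real.sqrt c := sq_rpow_quarter' hc.le
    gcongr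
  have htle : t ≤ Real.sqrt u * Real.sqrt v := by
    rw [← Real.sqrt_mul hu.le]
    calc t = Real.sqrt (t * t) := (Real.sqrt_mul_self ht).symm
      _ ≤ Real.sqrt (u * v) := Real.sqrt_le_sqrt (by nlinarith)
  calc t * ((u ^ (-(4:ℝ)⁻¹) - v ^ (-(4:ℝ)⁻¹))) ^ 2
      ≤ t * (Real.sqrt c / (Real.sqrt u * Real.sqrt v)) := mul_le_mul_of_nonneg_left hsq ht
    _ = Real.sqrt c * (t / (Real.sqrt u * Real.sqrt v)) := by ring
    _ ≤ Real.sqrt c * 1 := by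
        refine mul_le_mul_of_nonneg_left ?_ (Real.sqrt_nonneg c)
        rw [div_le_one (by positivity)]
        exact htle
    _ = Real.sqrt c := mul_one _

private lemma aux_R2 {t a b c : ℝ} (ht : 0 ≤ t) (ha : 0 < a) (hb : 0 < b) (hac : a ≤ c)
    (hbc : b ≤ c) :
    t * ((t + a) ^ (-(4:ℝ)⁻¹) - (t + b) ^ (-(4:ℝ)⁻¹)) ^ 2 ≤ Real.sqrt c := by
  rcases le_total a b with h | h
  · exact aux_R2' ht ha h hbc
  · have := aux_R2' ht hb h hac
    rw [← neg_sub, neg_pow] at this; simpa using this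

private lemma aux_le_rpow_quarter {x : ℝ} (hx0 : 0 ≤ x) (hx1 : x ≤ 1) : x ≤ x ^ ((4:ℝ)⁻¹) := by
  rcases eq_or_lt_of_le hx0 with h | h
  · simp [← h, Real.zero_rpow (by norm_num : ((4:ℝ)⁻¹) ≠ 0)]
  · calc x = x ^ (1:ℝ) := (Real.rpow_one x).symm
      _ ≤ x ^ ((4:ℝ)⁻¹) := Real.rpow_le_rpow_of_exponent_ge h hx1 (by norm_num)

private lemma sq_rpow_quarter'' {x : ℝ} (hx : 0 ≤ x) :
    (x ^ ((4:ℝ)⁻¹)) ^ 2 = Real.sqrt x := by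
  rw [← Real.rpow_natCast (x ^ ((4:ℝ)⁻¹)) 2, ← Real.rpow_mul hx, Real.sqrt_eq_rpow]
  norm_num

private lemma aux_R3 {t ε M : ℝ} (ht : 0 ≤ t) (htM : t ≤ M) (hε : 0 < ε) :
    t * (t ^ ((4:ℝ)⁻¹) * (t + ε) ^ (-(4:ℝ)⁻¹) - 1) ^ 2 ≤ Real.sqrt M * Real.sqrt ε := by
  have hu : 0 < t + ε := by linarith
  set x := t / (t + ε) with hxd
  have hx0 : 0 ≤ x := by positivity
  have hx1 : x ≤ 1 := by rw [hxd, div_le_one hu]; linarith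
  have hc : t ^ ((4:ℝ)⁻¹) * (t + ε) ^ (-(4:ℝ)⁻¹) = x ^ ((4:ℝ)⁻¹) := by
    rw [hxd, Real.div_rpow ht hu.le, Real.rpow_neg hu.le, div_eq_mul_inv]
  have hxp1 : x ^ ((4:ℝ)⁻¹) ≤ 1 := Real.rpow_le_one hx0 hx1 (by norm_num)
  have hkey : 1 - x ^ ((4:ℝ)⁻¹) ≤ (1 - x) ^ ((4:ℝ)⁻¹) := by
    have h1 := aux_le_rpow_quarter hx0 hx1
    have h2 := aux_le_rpow_quarter (by linarith : (0:ℝ) ≤ 1 - x) (by linarith)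
    linarith
  have hsq : (x ^ ((4:ℝ)⁻¹) - 1) ^ 2 ≤ Real.sqrt (1 - x) := by
    rw [← neg_sub, neg_pow, neg_one_sq, one_mul]
    calc (1 - x ^ ((4:ℝ)⁻¹)) ^ 2 ≤ ((1 - x) ^ ((4:ℝ)⁻¹)) ^ 2 :=
          pow_le_pow_left₀ (by linarith) hkey 2
      _ = Real.sqrt (1 - x) := sq_rpow_quarter'' (by linarith)
  have h1x : 1 - x = ε / (t + ε) := by rw [hxd]; field_simp; ring
  have hfin : t * Real.sqrt (1 - x) ≤ Real.sqrt M * Real.sqrt ε := by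
    rw [h1x, Real.sqrt_div hε.le]
    have hsu : 0 < Real.sqrt (t + ε) := Real.sqrt_pos.2 hu
    have htd : t / Real.sqrt (t + ε) ≤ Real.sqrt t := by
      rw [div_le_iff₀ hsu]
      calc t = Real.sqrt t * Real.sqrt t := (Real.mul_self_sqrt ht).symm
        _ ≤ Real.sqrt t * Real.sqrt (t + ε) :=
            mul_le_mul_of_nonneg_left (Real.sqrt_le_sqrt (by linarith)) (Real.sqrt_nonneg t)
    calc t * (Real.sqrt ε / Real.sqrt (t + ε))
        = Real.sqrt ε * (t / Real.sqrt (t + ε)) := by ring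
      _ ≤ Real.sqrt ε * Real.sqrt t :=
          mul_le_mul_of_nonneg_left htd (Real.sqrt_nonneg ε)
      _ ≤ Real.sqrt ε * Real.sqrt M :=
          mul_le_mul_of_nonneg_left (Real.sqrt_le_sqrt htM) (Real.sqrt_nonneg ε)
      _ = Real.sqrt M * Real.sqrt ε := mul_comm _ _
  calc t * (t ^ ((4:ℝ)⁻¹) * (t + ε) ^ (-(4:ℝ)⁻¹) - 1) ^ 2
      = t * (x ^ ((4:ℝ)⁻¹) - 1) ^ 2 := by rw [hc]
    _ ≤ t * Real.sqrt (1 - x) := mul_le_mul_of_nonneg_left hsq ht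
    _ ≤ Real.sqrt M * Real.sqrt ε := hfin

open ContinuousLinearMap in
private lemma aux_normsq {H K : Type*} [NormedAddCommGroup H] [InnerProductSpace ℂ H]
    [CompleteSpace H] [NormedAddCommGroup K] [InnerProductSpace ℂ K] [CompleteSpace K]
    (T : H →L[ℂ] K) (A : K →L[ℂ] K) (hA : A = T ∘L ContinuousLinearMap.adjoint T) (h : ℝ → ℝ)
    (hcont : ContinuousOn h (spectrum ℝ A)) :
    ‖cfc h A ∘L T‖ ^ 2 = ‖cfc (fun t : ℝ => h t * (t * h t)) A‖ := by
  have hsa : IsSelfAdjoint A := by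
    rw [ContinuousLinearMap.isSelfAdjoint_iff']
    rw [hA, ContinuousLinearMap.adjoint_comp, ContinuousLinearMap.adjoint_adjoint]
  set B := cfc h A with hBdef
  have hBsa : IsSelfAdjoint B := cfc_predicate h A
  have hBadj : ContinuousLinearMap.adjoint B = B := ContinuousLinearMap.isSelfAdjoint_iff'.1 hBsa
  set X := B ∘L T with hXdef
  have h1 : ‖X ∘L ContinuousLinearMap.adjoint X‖ = ‖X‖ ^ 2 := by
    have := ContinuousLinearMap.norm_adjoint_comp_self (ContinuousLinearMap.adjoint X)
    rw [ContinuousLinearMap.adjoint_adjoint] at this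
    rw [this, LinearIsometryEquiv.norm_map, sq]
  have h2 : X ∘L ContinuousLinearMap.adjoint X = B * (A * B) := by
    rw [hXdef, ContinuousLinearMap.adjoint_comp, hBadj]
    simp only [ContinuousLinearMap.mul_def, hA]
    rw [ContinuousLinearMap.comp_assoc, ContinuousLinearMap.comp_assoc]
  have h3 : cfc (fun t : ℝ => h t * (t * h t)) A = B * (A * B) := by
    have hid : ContinuousOn (fun t : ℝ => t) (spectrum ℝ A) := continuous_id.continuousOn
    rw [cfc_mul h (fun t => t * h t) A hcont (hid.mul hcont),
      cfc_mul (fun t : ℝ => t) h A hid hcont, cfc_id' ℝ A]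
  rw [h3, ← h2, h1]

set_option maxHeartbeats 1000000 in
open ContinuousLinearMap in
private theorem aux_main {H K : Type*} [NormedAddCommGroup H] [InnerProductSpace ℂ H]
    [CompleteSpace H] [NormedAddCommGroup K] [InnerProductSpace ℂ K] [CompleteSpace K]
    [Nontrivial K] (T : H →L[ℂ] K) (hT : IsCompactOperator T) :
    IsCompactOperator
      (cfc (fun t : ℝ => t ^ ((4 : ℝ)⁻¹)) (T ∘L ContinuousLinearMap.adjoint T) : K →L[ℂ] K) ∧
    (cfc (fun t : ℝ => t ^ ((4 : ℝ)⁻¹)) (T ∘L ContinuousLinearMap.adjoint T)).IsPositive ∧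
    ∃ S : H →L[ℂ] K, IsCompactOperator S ∧
      T = cfc (fun t : ℝ => t ^ ((4 : ℝ)⁻¹)) (T ∘L ContinuousLinearMap.adjoint T) ∘L S := by
  set A := T ∘L ContinuousLinearMap.adjoint T with hAdef
  set k := cfc (fun t : ℝ => t ^ ((4 : ℝ)⁻¹)) A with hkdef
  have hsa : IsSelfAdjoint A := by
    rw [ContinuousLinearMap.isSelfAdjoint_iff', hAdef, ContinuousLinearMap.adjoint_comp,
      ContinuousLinearMap.adjoint_adjoint]
  have hpos : (0 : K →L[ℂ] K) ≤ A := by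
    rw [ContinuousLinearMap.nonneg_iff_isPositive]
    have := ContinuousLinearMap.isPositive_one.conj_adjoint T
    simpa [hAdef, ContinuousLinearMap.one_def] using this
  have hspec0 : ∀ t ∈ spectrum ℝ A, (0:ℝ) ≤ t := fun t ht => spectrum_nonneg_of_nonneg hpos ht
  have hspecM : ∀ t ∈ spectrum ℝ A, t ≤ ‖A‖ := fun t ht => by
    have := spectrum.norm_le_norm_of_mem ht
    rwa [Real.norm_of_nonneg (hspec0 t ht)] at this
  have hAcomp : IsCompactOperator A := by
    exact hT.comp_clm (ContinuousLinearMap.adjoint T)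
  have hfc : Continuous (fun t : ℝ => t ^ ((4:ℝ)⁻¹)) := by
    rw [continuous_iff_continuousAt]
    exact fun x => Real.continuousAt_rpow_const x _ (Or.inr (by norm_num))
  have hfcOn : ContinuousOn (fun t : ℝ => t ^ ((4:ℝ)⁻¹)) (spectrum ℝ A) := hfc.continuousOn
  have hgcOn : ∀ ε : ℝ, 0 < ε →
      ContinuousOn (fun t : ℝ => (t + ε) ^ (-(4:ℝ)⁻¹)) (spectrum ℝ A) := by
    intro ε hε t ht
    refine (ContinuousAt.rpow_const (continuousAt_id.add continuousAt_const)
      (Or.inl ?_)).continuousWithinAt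
    have := hspec0 t ht
    intro hc
    change t + ε = 0 at hc
    nlinarith
  set e : ℕ → ℝ := fun n => 1 / ((n:ℝ) + 1) with hedef
  have he : ∀ n, 0 < e n := fun n => by positivity
  have hemono : ∀ m n : ℕ, m ≤ n → e n ≤ e m := by
    intro m n h
    apply one_div_le_one_div_of_le (by positivity)
    have : (m:ℝ) ≤ (n:ℝ) := by exact_mod_cast h
    linarith
  have heT : Filter.Tendsto e Filter.atTop (nhds 0) := tendsto_one_div_add_atTop_nhds_zero_nat
  -- Part A : k is compact
  have hkc : IsCompactOperator k := by
    set C : ℕ → (K →L[ℂ] K) := fun n =>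
      A * cfc (fun t : ℝ => t ^ ((4:ℝ)⁻¹) * (t + e n)⁻¹) A with hCdef
    have hqcOn : ∀ n, ContinuousOn (fun t : ℝ => t ^ ((4:ℝ)⁻¹) * (t + e n)⁻¹)
        (spectrum ℝ A) := by
      intro n t ht
      refine (hfc.continuousAt.mul ((continuousAt_id.add continuousAt_const).inv₀
        ?_)).continuousWithinAt
      have h0 := hspec0 t ht
      have h1 := he n
      intro hc
      change t + e n = 0 at hc
      nlinarith
    have hCcomp : ∀ n, IsCompactOperator (C n) := by
      intro n
      exact hAcomp.comp_clm (cfc (fun t : ℝ => t ^ ((4:ℝ)⁻¹) * (t + e n)⁻¹) A)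
    have hCn : ∀ n, C n = cfc (fun t : ℝ => t * (t ^ ((4:ℝ)⁻¹) * (t + e n)⁻¹)) A := by
      intro n
      rw [cfc_mul (fun t : ℝ => t) _ A continuous_id.continuousOn (hqcOn n), cfc_id' ℝ A]
    have hdiff : ∀ n, ‖k - C n‖ ≤ (e n) ^ ((4:ℝ)⁻¹) := by
      intro n
      have heq : k - C n = cfc
          (fun t : ℝ => t ^ ((4:ℝ)⁻¹) - t * (t ^ ((4:ℝ)⁻¹) * (t + e n)⁻¹)) A := by
        rw [cfc_sub (fun t : ℝ => t ^ ((4:ℝ)⁻¹))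
          (fun t : ℝ => t * (t ^ ((4:ℝ)⁻¹) * (t + e n)⁻¹)) A hfcOn
          (continuous_id.continuousOn.mul (hqcOn n)), hCn n, hkdef]
      rw [heq]
      refine norm_cfc_le (by positivity) ?_
      intro t ht
      rw [Real.norm_eq_abs]
      exact aux_R1 (hspec0 t ht) (he n)
    have htend : Filter.Tendsto C Filter.atTop (nhds k) := by
      rw [tendsto_iff_norm_sub_tendsto_zero]
      have hb : ∀ n, ‖C n - k‖ ≤ (e n) ^ ((4:ℝ)⁻¹) := fun n => by
        rw [norm_sub_rev]; exact hdiff n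
      refine squeeze_zero (fun n => norm_nonneg _) hb ?_
      have h0 : Filter.Tendsto (fun n => (e n) ^ ((4:ℝ)⁻¹)) Filter.atTop
          (nhds ((0:ℝ) ^ ((4:ℝ)⁻¹))) := heT.rpow_const (Or.inr (by norm_num))
      rwa [Real.zero_rpow (by norm_num)] at h0
    exact isClosed_setOf_isCompactOperator.mem_of_tendsto htend
      (Filter.Eventually.of_forall hCcomp)
  -- Part B : k is positive
  have hkpos : (0 : K →L[ℂ] K) ≤ k :=
    cfc_nonneg (fun t ht => Real.rpow_nonneg (hspec0 t ht) _)
  -- Part C : the factorization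
  set g : ℕ → ℝ → ℝ := fun n t => (t + e n) ^ (-(4:ℝ)⁻¹) with hgdef
  set Sn : ℕ → (H →L[ℂ] K) := fun n => cfc (g n) A ∘L T with hSndef
  have hSncomp : ∀ n, IsCompactOperator (Sn n) := by
    intro n
    exact hT.clm_comp (cfc (g n) A)
  have hCauchy : CauchySeq Sn := by
    refine cauchySeq_of_le_tendsto_0 (fun N => Real.sqrt (Real.sqrt (e N))) ?_ ?_
    · intro n m N hn hm
      rw [dist_eq_norm]
      have heq : Sn n - Sn m = cfc (fun t => g n t - g m t) A ∘L T := by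
        simp only [hSndef]
        rw [cfc_sub (g n) (g m) A (hgcOn _ (he n)) (hgcOn _ (he m)),
          ContinuousLinearMap.sub_comp]
      rw [heq]
      have hb : ‖cfc (fun t => g n t - g m t) A ∘L T‖ ^ 2 ≤ Real.sqrt (e N) := by
        rw [aux_normsq T A hAdef (fun t => g n t - g m t) ((hgcOn _ (he n)).sub (hgcOn _ (he m)))]
        refine norm_cfc_le (Real.sqrt_nonneg _) ?_
        intro t ht
        have h1 : (g n t - g m t) * (t * (g n t - g m t)) = t * (g n t - g m t) ^ 2 := by
          ring
        rw [Real.norm_eq_abs, h1, abs_of_nonneg (mul_nonneg (hspec0 t ht) (sq_nonneg _))]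
        simp only [hgdef]
        exact aux_R2 (hspec0 t ht) (he n) (he m) (hemono N n hn) (hemono N m hm)
      have hnn : (0:ℝ) ≤ ‖cfc (fun t => g n t - g m t) A ∘L T‖ := norm_nonneg _
      nlinarith [Real.sq_sqrt (Real.sqrt_nonneg (e N)),
        Real.sqrt_nonneg (Real.sqrt (e N))]
    · have h1 := heT.sqrt
      rw [Real.sqrt_zero] at h1
      have h2 := h1.sqrt
      rwa [Real.sqrt_zero] at h2
  obtain ⟨S, hS⟩ := cauchySeq_tendsto_of_complete hCauchy
  have hScomp : IsCompactOperator S :=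
    isClosed_setOf_isCompactOperator.mem_of_tendsto hS (Filter.Eventually.of_forall hSncomp)
  refine ⟨hkc, (ContinuousLinearMap.nonneg_iff_isPositive k).1 hkpos, S, hScomp, ?_⟩
  have h1 : Filter.Tendsto (fun n => k ∘L Sn n) Filter.atTop (nhds (k ∘L S)) := by
    rw [tendsto_iff_norm_sub_tendsto_zero]
    have hb : ∀ n, ‖k ∘L Sn n - k ∘L S‖ ≤ ‖k‖ * ‖Sn n - S‖ := by
      intro n
      rw [← ContinuousLinearMap.comp_sub]
      exact ContinuousLinearMap.opNorm_comp_le _ _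
    refine squeeze_zero (fun n => norm_nonneg _) hb ?_
    have h2 : Filter.Tendsto (fun n => ‖Sn n - S‖) Filter.atTop (nhds 0) :=
      tendsto_iff_norm_sub_tendsto_zero.1 hS
    simpa using h2.const_mul ‖k‖
  have h2 : Filter.Tendsto (fun n => k ∘L Sn n) Filter.atTop (nhds T) := by
    rw [tendsto_iff_norm_sub_tendsto_zero]
    have key : ∀ n, ‖k ∘L Sn n - T‖ ≤ Real.sqrt (Real.sqrt ‖A‖ * Real.sqrt (e n)) := by
      intro n
      have hfg : ContinuousOn (fun t : ℝ => t ^ ((4:ℝ)⁻¹) * g n t) (spectrum ℝ A) :=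
        hfcOn.mul (hgcOn _ (he n))
      have heq : k ∘L Sn n - T = cfc (fun t : ℝ => t ^ ((4:ℝ)⁻¹) * g n t - 1) A ∘L T := by
        simp only [hSndef, hkdef]
        rw [← ContinuousLinearMap.comp_assoc, ← ContinuousLinearMap.mul_def,
          ← cfc_mul (fun t : ℝ => t ^ ((4:ℝ)⁻¹)) (g n) A hfcOn (hgcOn _ (he n)),
          cfc_sub (fun t : ℝ => t ^ ((4:ℝ)⁻¹) * g n t) (fun _ : ℝ => (1:ℝ)) A hfg
          continuousOn_const, cfc_const_one ℝ A,
          ContinuousLinearMap.sub_comp, ContinuousLinearMap.one_def,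
          ContinuousLinearMap.id_comp]
      rw [heq]
      have hsq : ‖cfc (fun t : ℝ => t ^ ((4:ℝ)⁻¹) * g n t - 1) A ∘L T‖ ^ 2
          ≤ Real.sqrt ‖A‖ * Real.sqrt (e n) := by
        rw [aux_normsq T A hAdef (fun t : ℝ => t ^ ((4:ℝ)⁻¹) * g n t - 1) (hfg.sub continuousOn_const)]
        refine norm_cfc_le (by positivity) ?_
        intro t ht
        have hr : (t ^ ((4:ℝ)⁻¹) * g n t - 1) * (t * (t ^ ((4:ℝ)⁻¹) * g n t - 1))
            = t * (t ^ ((4:ℝ)⁻¹) * (t + e n) ^ (-(4:ℝ)⁻¹) - 1) ^ 2 := by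
          simp only [hgdef]; ring
        rw [Real.norm_eq_abs, hr,
          abs_of_nonneg (mul_nonneg (hspec0 t ht) (sq_nonneg _))]
        exact aux_R3 (hspec0 t ht) (hspecM t ht) (he n)
      have hnn : (0:ℝ) ≤ ‖cfc (fun t : ℝ => t ^ ((4:ℝ)⁻¹) * g n t - 1) A ∘L T‖ :=
        norm_nonneg _
      nlinarith [Real.sq_sqrt (mul_nonneg (Real.sqrt_nonneg ‖A‖) (Real.sqrt_nonneg (e n))),
        Real.sqrt_nonneg (Real.sqrt ‖A‖ * Real.sqrt (e n))]
    refine squeeze_zero (fun n => norm_nonneg _) key ?_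
    have h3 := (heT.sqrt.const_mul (Real.sqrt ‖A‖)).sqrt
    rw [Real.sqrt_zero, mul_zero, Real.sqrt_zero] at h3
    exact h3
  exact tendsto_nhds_unique h2 h1

/-- Let `H`, `K` be Hilbert spaces.  Every compact operator `T : H → K`
factors as `T = k ∘ S` with `k = (T T*)^{1/4} ∈ K(K)` positive and compact and `S ∈ K(H, K)`.
Consequently `K(H, K)` equals the closed linear span of `{k ∘ S : k ∈ K(K), S ∈ K(H, K)}`. -/
theorem stmt19 {H K : Type*} [NormedAddCommGroup H] [InnerProductSpace ℂ H] [CompleteSpace H]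
    [NormedAddCommGroup K] [InnerProductSpace ℂ K] [CompleteSpace K] :
    (∀ T : H →L[ℂ] K, IsCompactOperator T →
      ∀ k : K →L[ℂ] K,
        k = cfc (fun t : ℝ => t ^ ((4 : ℝ)⁻¹)) (T ∘L ContinuousLinearMap.adjoint T) →
        IsCompactOperator k ∧ k.IsPositive ∧
        ∃ S : H →L[ℂ] K, IsCompactOperator S ∧ T = k ∘L S) ∧
    {T : H →L[ℂ] K | IsCompactOperator T} =
      closure (Submodule.span ℂ {T : H →L[ℂ] K | ∃ (k : K →L[ℂ] K) (S : H →L[ℂ] K),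
        IsCompactOperator k ∧ IsCompactOperator S ∧ T = k ∘L S} : Set (H →L[ℂ] K)) := by
  have part1 : ∀ T : H →L[ℂ] K, IsCompactOperator T →
      ∀ k : K →L[ℂ] K,
        k = cfc (fun t : ℝ => t ^ ((4 : ℝ)⁻¹)) (T ∘L ContinuousLinearMap.adjoint T) →
        IsCompactOperator k ∧ k.IsPositive ∧
        ∃ S : H →L[ℂ] K, IsCompactOperator S ∧ T = k ∘L S := by
    intro T hT k hk
    rcases subsingleton_or_nontrivial K with hK | hK
    · have hk0 : k = 0 := Subsingleton.elim k 0
      refine ⟨?_, ?_, 0, ?_, ?_⟩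
      · rw [hk0]
        exact isCompactOperator_zero
      · rw [hk0]
        exact ContinuousLinearMap.isPositive_zero
      · exact isCompactOperator_zero
      · exact Subsingleton.elim T _
    · obtain ⟨h1, h2, S, hS, hTS⟩ := aux_main T hT
      exact ⟨hk ▸ h1, hk ▸ h2, S, hS, hk ▸ hTS⟩
  refine ⟨part1, Set.Subset.antisymm ?_ ?_⟩
  · intro T hT
    obtain ⟨hkc, hkp, S, hSc, hTS⟩ := part1 T hT _ rfl
    exact subset_closure (Submodule.subset_span ⟨_, S, hkc, hSc, hTS⟩)
  · refine closure_minimal ?_ isClosed_setOf_isCompactOperator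
    intro x hx
    induction hx using Submodule.span_induction with
    | mem y h =>
      obtain ⟨k, S, hk, hS, rfl⟩ := h
      exact hS.clm_comp k
    | zero => exact isCompactOperator_zero
    | add y z _ _ hy hz => exact hy.add hz
    | smul c y _ hy => exact hy.smul c
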